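/- Assume the half-grid hypotheses for a 16-point set Z = Z_a ∪ Z_b ∪ Z_c ∪ Z_d on four pairwise skew lines R_a, R_b, R_c, R_d in ℙ³. Then there exist two distinct lines S ≠ S' in ℙ³, each of which meets all four lines R_a, R_b, R_c, R_d (i.e., there are two distinct transversals to the four lines). -/

import Mathlib

open Projectivization
open scoped LinearAlgebra.Projectivization

/-- The half-grid hypotheses for a 16-point set `Z = Z 0 ∪ Z 1 ∪ Z 2 ∪ Z 3` distributed
evenly on four pairwise skew lines `R 0, …, R 3` in `ℙ³` (lines are given by their
2-dimensional subspaces of `ℂ⁴`):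
* each `Z x` consists of 4 distinct points of the line `ℙ(R x)`;
* no nonzero homogeneous quadratic form on `ℂ⁴` vanishes at all points of `Z`;
* for each `x`, the 12 points `Z ∖ Z x` form a (3,4)-grid with respect to the remaining
  three lines: there are four pairwise skew lines `ℓ 0, …, ℓ 3`, each meeting each line
  `ℙ(R y)` (`y ≠ x`) in exactly one point, the 12 intersection points being exactly
  `Z ∖ Z x`. -/
structure HalfGridHyp (R : Fin 4 → Submodule ℂ (Fin 4 → ℂ))
    (Z : Fin 4 → Set (ℙ ℂ (Fin 4 → ℂ))) : Prop where
  finrank_eq : ∀ x, Module.finrank ℂ (R x) = 2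
  skew : ∀ x y, x ≠ y → R x ⊓ R y = ⊥
  ncard_eq : ∀ x, (Z x).ncard = 4
  mem_line : ∀ x, ∀ p ∈ Z x, p.submodule ≤ R x
  no_quadric : ¬ ∃ q : QuadraticForm ℂ (Fin 4 → ℂ), q ≠ 0 ∧
    ∀ x, ∀ p ∈ Z x, ∀ v ∈ Projectivization.submodule p, q v = 0
  grid : ∀ x : Fin 4, ∃ ℓ : Fin 4 → Submodule ℂ (Fin 4 → ℂ),
    (∀ i, Module.finrank ℂ (ℓ i) = 2) ∧
    (∀ i j, i ≠ j → ℓ i ⊓ ℓ j = ⊥) ∧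
    (∀ i, ∀ y, y ≠ x → ∃! p : ℙ ℂ (Fin 4 → ℂ),
      p.submodule ≤ ℓ i ∧ p.submodule ≤ R y) ∧
    {p : ℙ ℂ (Fin 4 → ℂ) | ∃ i y, y ≠ x ∧ p.submodule ≤ ℓ i ∧ p.submodule ≤ R y}
      = (⋃ y, Z y) \ Z x


open Module Submodule

noncomputable section
namespace HGAux

abbrev V := Fin 4 → ℂ

lemma finrank_V : Module.finrank ℂ V = 4 := by simp

lemma indep_of_disjoint {W₁ W₂ : Submodule ℂ V} (h : W₁ ⊓ W₂ = ⊥)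
    {u w : V} (hu : u ∈ W₁) (hw : w ∈ W₂) (hu0 : u ≠ 0) (hw0 : w ≠ 0) :
    LinearIndependent ℂ ![u, w] := by
  rw [LinearIndependent.pair_iff]
  intro s t hst
  have h1 : s • u = -(t • w) := by
    rw [eq_neg_iff_add_eq_zero]; exact hst
  have h2 : s • u ∈ W₁ ⊓ W₂ := by
    refine ⟨smul_mem _ _ hu, ?_⟩
    rw [h1]; exact neg_mem (smul_mem _ _ hw)
  rw [h] at h2
  have hs : s = 0 := by
    rcases smul_eq_zero.mp (mem_bot ℂ |>.mp h2) with hs | hu'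
    · exact hs
    · exact absurd hu' hu0
  subst hs
  simp only [zero_smul, zero_add] at hst
  rcases smul_eq_zero.mp hst with ht | hw'
  · exact ⟨rfl, ht⟩
  · exact absurd hw' hw0

lemma span_pair_finrank {u w : V} (h : LinearIndependent ℂ ![u, w]) :
    Module.finrank ℂ (span ℂ {u, w}) = 2 := by
  have hr : Set.range ![u, w] = {u, w} := by
    simp [Matrix.range_cons, Matrix.range_empty, Set.pair_comm]
  have := finrank_span_eq_card h
  rw [hr] at this
  simpa using this

/-- Graph representation of a 2-plane skew to both summands of a decomposition. -/
lemma graph_exists (W₁ W₂ L : Submodule ℂ V)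
    (h1 : Module.finrank ℂ W₁ = 2) (h2 : Module.finrank ℂ W₂ = 2)
    (hL : Module.finrank ℂ L = 2)
    (h12 : W₁ ⊓ W₂ = ⊥) (hL1 : L ⊓ W₁ = ⊥) (hL2 : L ⊓ W₂ = ⊥) :
    ∃ A : W₁ →ₗ[ℂ] W₂, Function.Bijective A ∧
      (∀ u : W₁, (u : V) + (A u : V) ∈ L) ∧
      (∀ v ∈ L, ∃ u : W₁, v = (u : V) + (A u : V)) := by
  have hfd : FiniteDimensional ℂ V := by infer_instance
  have hcompl : IsCompl W₁ W₂ := by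
    constructor
    · rw [disjoint_iff]; exact h12
    · rw [codisjoint_iff]
      apply Submodule.eq_top_of_finrank_eq
      have := Submodule.finrank_sup_add_finrank_inf_eq W₁ W₂
      rw [h12] at this
      simp only [finrank_bot, add_zero] at this
      rw [this, h1, h2, finrank_V]
  set π₁ := W₁.linearProjOfIsCompl W₂ hcompl with hπ₁
  set π₂ := W₂.linearProjOfIsCompl W₁ hcompl.symm with hπ₂
  have hsum : ∀ x : V, ((π₁ x : V) + (π₂ x : V)) = x := fun x =>
    Submodule.projection_add_projection_eq_self hcompl x
  set φ : L →ₗ[ℂ] W₁ := π₁.comp L.subtype with hφ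
  have hφinj : Function.Injective φ := by
    rw [← LinearMap.ker_eq_bot]
    rw [Submodule.eq_bot_iff]
    rintro ⟨x, hx⟩ hker
    have h0 : π₁ x = 0 := hker
    have : x = (π₂ x : V) := by
      have := hsum x
      rw [h0] at this; simpa using this.symm
    have hx2 : x ∈ L ⊓ W₂ := ⟨hx, this ▸ (π₂ x).2⟩
    rw [hL2] at hx2
    exact Subtype.ext (by simpa using hx2)
  have hφbij : Function.Bijective φ :=
    ⟨hφinj, (LinearMap.injective_iff_surjective_of_finrank_eq_finrank (by rw [hL, h1])).mp hφinj⟩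
  set e := LinearEquiv.ofBijective φ hφbij with he
  set A : W₁ →ₗ[ℂ] W₂ := (π₂.comp L.subtype).comp (e.symm : W₁ →ₗ[ℂ] L) with hA
  have hgraph : ∀ u : W₁, (u : V) + (A u : V) ∈ L := by
    intro u
    have hx : (e (e.symm u)) = u := e.apply_symm_apply u
    have hxval : π₁ ((e.symm u : L) : V) = u := hx
    have := hsum ((e.symm u : L) : V)
    rw [hxval] at this
    have hAu : (A u : V) = (π₂ ((e.symm u : L) : V) : V) := rfl
    rw [hAu, this]
    exact (e.symm u).2
  have hAinj : Function.Injective A := by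
    rw [← LinearMap.ker_eq_bot, Submodule.eq_bot_iff]
    intro u hker
    have h0 : (A u : V) = 0 := by
      have : A u = 0 := hker
      rw [this]; rfl
    have hmem := hgraph u
    rw [h0, add_zero] at hmem
    have : (u : V) ∈ L ⊓ W₁ := ⟨hmem, u.2⟩
    rw [hL1] at this
    exact Subtype.ext (by simpa using this)
  refine ⟨A, ⟨hAinj, (LinearMap.injective_iff_surjective_of_finrank_eq_finrank (by rw [h1, h2])).mp hAinj⟩, hgraph, ?_⟩
  intro v hv
  refine ⟨φ ⟨v, hv⟩, ?_⟩
  have hes : e.symm (φ ⟨v, hv⟩) = ⟨v, hv⟩ := by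
    have : e ⟨v, hv⟩ = φ ⟨v, hv⟩ := rfl
    rw [← this, e.symm_apply_apply]
  have hAu : (A (φ ⟨v, hv⟩) : V) = (π₂ v : V) := by
    rw [hA]; simp only [LinearMap.comp_apply, LinearEquiv.coe_coe]
    rw [hes]; rfl
  have hφv : ((φ ⟨v, hv⟩ : W₁) : V) = (π₁ v : V) := rfl
  rw [hAu, hφv, hsum v]

variable {W : Type*} [AddCommGroup W] [Module ℂ W]

lemma collision (C : Module.End ℂ W) (T : Set W)
    (hne : T.Nonempty) (h0 : (0:W) ∉ T)
    (hstep : ∀ u ∈ T, ∃ w ∈ T, ∃ s : ℂ, C u = s • w)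
    (hsmall : ∀ f : Fin 5 → W, (∀ i, f i ∈ T) → ∃ i j, i ≠ j ∧ ∃ s : ℂ, f j = s • f i) :
    ∃ w ∈ T, ∃ k : ℕ, 1 ≤ k ∧ ∃ s : ℂ, (C ^ k) w = s • w := by
  obtain ⟨u₀, hu₀⟩ := hne
  have hstep' : ∀ x : {u : W // u ∈ T}, ∃ y : {u : W // u ∈ T}, ∃ s : ℂ, C x.1 = s • y.1 := by
    rintro ⟨u, hu⟩
    obtain ⟨w, hw, s, hs⟩ := hstep u hu
    exact ⟨⟨w, hw⟩, s, hs⟩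
  choose next s hs using hstep'
  set seq : ℕ → {u : W // u ∈ T} := fun n => next^[n] ⟨u₀, hu₀⟩ with hseq
  have hstepseq : ∀ n, C (seq n).1 = s (seq n) • (seq (n+1)).1 := by
    intro n
    have h1 : seq (n+1) = next (seq n) := Function.iterate_succ_apply' next n _
    rw [h1]; exact hs (seq n)
  have hpow : ∀ m k : ℕ, ∃ t : ℂ, (C ^ k) (seq m).1 = t • (seq (m+k)).1 := by
    intro m k
    induction k with
    | zero => exact ⟨1, by simp⟩
    | succ k ih =>
      obtain ⟨t, ht⟩ := ih
      refine ⟨t * s (seq (m+k)), ?_⟩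
      rw [pow_succ', Module.End.mul_apply, ht, map_smul, hstepseq (m+k), smul_smul]
      rfl
  have main : ∀ i j : ℕ, i < j → (∃ s' : ℂ, (seq j).1 = s' • (seq i).1) →
      ∃ w ∈ T, ∃ k : ℕ, 1 ≤ k ∧ ∃ s : ℂ, (C ^ k) w = s • w := by
    rintro i j hij ⟨s', hs'⟩
    obtain ⟨t, ht⟩ := hpow i (j - i)
    rw [Nat.add_sub_cancel' (le_of_lt hij)] at ht
    refine ⟨(seq i).1, (seq i).2, j - i, by omega, t * s', ?_⟩
    rw [ht, hs', smul_smul]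
  obtain ⟨i, j, hij, s', hs'⟩ := hsmall (fun i => (seq i).1) (fun i => (seq i).2)
  rcases lt_or_gt_of_ne hij with h | h
  · exact main i j (by exact_mod_cast h) ⟨s', hs'⟩
  · have hs'0 : s' ≠ 0 := by
      intro hs0
      rw [hs0, zero_smul] at hs'
      exact h0 (hs' ▸ (seq (j:ℕ)).2)
    refine main j i (by exact_mod_cast h) ⟨s'⁻¹, ?_⟩
    rw [hs', smul_smul, inv_mul_cancel₀ hs'0, one_smul]

lemma charpoly_factor [FiniteDimensional ℂ W]
    (hW : Module.finrank ℂ W = 2) (C : Module.End ℂ W) :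
    ∃ a b : ℂ, (C - algebraMap ℂ (Module.End ℂ W) a) * (C - algebraMap ℂ (Module.End ℂ W) b) = 0 := by
  have hmonic := C.charpoly_monic
  have hsplits : C.charpoly.Splits := IsAlgClosed.splits _
  have hdeg : C.charpoly.natDegree = 2 := by rw [C.charpoly_natDegree, hW]
  have hcard : Multiset.card C.charpoly.roots = 2 := by
    rw [Polynomial.splits_iff_card_roots.mp hsplits, hdeg]
  obtain ⟨a, b, hab⟩ := Multiset.card_eq_two.mp hcard
  have heq := hsplits.eq_prod_roots_of_monic hmonic
  rw [hab] at heq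
  have hfac : C.charpoly = (Polynomial.X - Polynomial.C a) * (Polynomial.X - Polynomial.C b) := by
    rw [heq]
    simp
  have h0 := LinearMap.aeval_self_charpoly C
  rw [hfac] at h0
  refine ⟨a, b, ?_⟩
  simpa [map_mul, map_sub, Polynomial.aeval_X, Polynomial.aeval_C] using h0


lemma pow_apply (C N : Module.End ℂ W) (a : ℂ)
    (hC : ∀ w, C w = a • w + N w) (hN2 : ∀ w, N (N w) = 0) (k : ℕ) (w : W) :
    (C ^ k) w = a ^ k • w + ((k : ℂ) * a ^ (k - 1)) • N w := by
  induction k with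
  | zero => simp
  | succ k ih =>
    have hcoef : ((k:ℂ) * a ^ (k-1)) * a + a ^ k = (((k+1 : ℕ)) : ℂ) * a ^ ((k+1) - 1) := by
      cases k with
      | zero => simp
      | succ j =>
        have h1 : (j:ℕ) + 1 - 1 = j := rfl
        have h2 : (j:ℕ) + 1 + 1 - 1 = j + 1 := rfl
        rw [h1, h2]
        push_cast
        ring
    calc (C ^ (k+1)) w = C ((C ^ k) w) := by rw [pow_succ', Module.End.mul_apply]
      _ = C (a ^ k • w + ((k:ℂ) * a ^ (k-1)) • N w) := by rw [ih]
      _ = a ^ k • C w + ((k:ℂ) * a ^ (k-1)) • C (N w) := by rw [map_add, map_smul, map_smul]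
      _ = a ^ k • (a • w + N w) + ((k:ℂ) * a ^ (k-1)) • (a • N w + N (N w)) := by
          rw [hC w, hC (N w)]
      _ = a ^ k • (a • w + N w) + ((k:ℂ) * a ^ (k-1)) • (a • N w) := by rw [hN2 w, add_zero]
      _ = a ^ (k+1) • w + ((((k+1:ℕ)):ℂ) * a ^ ((k+1) - 1)) • N w := by
          rw [← hcoef]; module

lemma eig_of_pow (C N : Module.End ℂ W) (a : ℂ)
    (hC : ∀ w, C w = a • w + N w) (hN2 : ∀ w, N (N w) = 0) (ha : a ≠ 0)
    (w : W) (hw : w ≠ 0) (k : ℕ) (hk : 1 ≤ k) (s : ℂ) (hpow : (C ^ k) w = s • w) :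
    C w = a • w := by
  have h1 : a ^ k • w + ((k:ℂ) * a ^ (k-1)) • N w = s • w := by
    rw [← hpow, pow_apply C N a hC hN2 k w]
  set c : ℂ := (k:ℂ) * a ^ (k-1) with hc
  have hc0 : c ≠ 0 := mul_ne_zero (Nat.cast_ne_zero.2 (by omega)) (pow_ne_zero _ ha)
  have h2 : c • N w = (s - a ^ k) • w := by
    have : c • N w = s • w - a ^ k • w := by
      rw [← h1]; abel
    rw [this, ← sub_smul]
  have hNw : N w = (c⁻¹ * (s - a ^ k)) • w := by
    have := congrArg (fun v => c⁻¹ • v) h2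
    simpa [smul_smul, inv_mul_cancel₀ hc0] using this
  have hNN : N (N w) = 0 := hN2 w
  rw [hNw, map_smul, hNw, smul_smul] at hNN
  have hz : (c⁻¹ * (s - a ^ k)) * (c⁻¹ * (s - a ^ k)) = 0 := by
    rcases smul_eq_zero.mp hNN with h | h
    · exact h
    · exact absurd h hw
  have hτ : c⁻¹ * (s - a ^ k) = 0 := mul_self_eq_zero.mp hz
  rw [hτ, zero_smul] at hNw
  rw [hC w, hNw, add_zero]


lemma rep_mem_submodule' (p : ℙ ℂ V) : p.rep ∈ p.submodule := by
  rw [Projectivization.submodule_eq]; exact mem_span_singleton_self _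

lemma push (R : Fin 4 → Submodule ℂ V) (Z : Fin 4 → Set (ℙ ℂ V)) (hyp : HalfGridHyp R Z)
    (c d x g : Fin 4) (hcd : c ≠ d) (hcg : c ≠ g) (hdg : d ≠ g) (hxg : x ≠ g)
    (A : R c →ₗ[ℂ] R d) (hAinj : Function.Injective A)
    (hrep : ∀ v ∈ R x, ∃ u' : R c, v = (u' : V) + (A u' : V))
    (u : R c) (hu : (u : V) ≠ 0)
    (hp : Projectivization.mk ℂ (u : V) hu ∈ Z c) :
    ∃ hw : ((A u : V)) ≠ 0, Projectivization.mk ℂ ((A u : V)) hw ∈ Z d := by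
  have hu0 : u ≠ 0 := fun h => hu (by rw [h]; rfl)
  have hAu0 : (A u : V) ≠ 0 := by
    intro h
    apply hu0
    apply hAinj
    rw [map_zero]
    exact Subtype.ext h
  obtain ⟨ℓ, hdim, -, hmeet, hset⟩ := hyp.grid g
  set p := Projectivization.mk ℂ (u : V) hu with hpdef
  have hpsub : p.submodule = span ℂ {(u : V)} := Projectivization.submodule_mk _ _
  have humem : (u : V) ∈ p.submodule := by rw [hpsub]; exact mem_span_singleton_self _
  have hpZ : p ∈ (⋃ y, Z y) \ Z g := by
    refine ⟨Set.mem_iUnion.2 ⟨c, hp⟩, ?_⟩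
    intro h
    have hle : p.submodule ≤ R c ⊓ R g := le_inf (hyp.mem_line c p hp) (hyp.mem_line g p h)
    rw [hyp.skew c g hcg] at hle
    exact hu (by simpa using hle humem)
  rw [← hset] at hpZ
  obtain ⟨i, y, hy, hpl, hpy⟩ := hpZ
  obtain ⟨q, ⟨hql, hqd⟩, -⟩ := hmeet i d hdg
  obtain ⟨r, ⟨hrl, hrx⟩, -⟩ := hmeet i x hxg
  have huℓ : (u : V) ∈ ℓ i := hpl humem
  set wq := q.rep with hwqdef
  have hwqℓ : wq ∈ ℓ i := hql (rep_mem_submodule' q)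
  have hwqd : wq ∈ R d := hqd (rep_mem_submodule' q)
  have hwq0 : wq ≠ 0 := Projectivization.rep_nonzero q
  have hind : LinearIndependent ℂ ![(u : V), wq] :=
    indep_of_disjoint (hyp.skew c d hcd) u.2 hwqd hu hwq0
  have hspan : span ℂ {(u : V), wq} = ℓ i := by
    apply Submodule.eq_of_le_of_finrank_le
    · rw [span_le]
      rintro z hz
      rcases hz with h | h
      · rw [h]; exact huℓ
      · rw [Set.mem_singleton_iff.mp h]; exact hwqℓ
    · rw [hdim i, span_pair_finrank hind]
  set vr := r.rep with hvrdef
  have hvrℓ : vr ∈ span ℂ {(u : V), wq} := by rw [hspan]; exact hrl (rep_mem_submodule' r)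
  have hvrx : vr ∈ R x := hrx (rep_mem_submodule' r)
  have hvr0 : vr ≠ 0 := Projectivization.rep_nonzero r
  obtain ⟨α, β, hαβ⟩ := mem_span_pair.mp hvrℓ
  obtain ⟨u', hu'⟩ := hrep vr hvrx
  have key : α • (u : V) - (u' : V) = ((A u' : V)) - β • wq := by
    rw [sub_eq_sub_iff_add_eq_add]
    rw [hu'] at hαβ
    rw [hαβ]
    abel
  have hmem2 : α • (u : V) - (u' : V) ∈ R c ⊓ R d := by
    constructor
    · exact sub_mem (smul_mem _ _ u.2) u'.2
    · rw [key]; exact sub_mem (A u').2 (smul_mem _ _ hwqd)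
  rw [hyp.skew c d hcd, mem_bot] at hmem2
  have h1 : α • (u : V) = (u' : V) := by rwa [sub_eq_zero] at hmem2
  have h2 : ((A u' : V)) = β • wq := by
    rw [hmem2] at key
    exact (sub_eq_zero.mp key.symm)
  have hα : α ≠ 0 := by
    intro h
    rw [h, zero_smul] at h1
    have hu'0 : u' = 0 := Subtype.ext (by simpa using h1.symm)
    rw [hu'0, map_zero] at h2
    apply hvr0
    rw [hu', hu'0]
    simp
  have hu'eq : u' = α • u := by
    apply Subtype.ext
    rw [← h1]; rfl
  have hAux : ((A u' : V)) = α • ((A u : V)) := by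
    rw [hu'eq, map_smul]; rfl
  have hβ : β ≠ 0 := by
    intro h
    rw [h, zero_smul] at h2
    rw [hAux] at h2
    exact hAu0 (by simpa [hα] using h2)
  have hwqeq : β • wq = α • ((A u : V)) := by rw [← h2, hAux]
  have hq : Projectivization.mk ℂ ((A u : V)) hAu0 = q := by
    conv_rhs => rw [← Projectivization.mk_rep q]
    rw [Projectivization.mk_eq_mk_iff]
    refine ⟨Units.mk0 (α⁻¹ * β) (by simp [hα, hβ]), ?_⟩
    have : wq = (β⁻¹ * α) • ((A u : V)) := by
      rw [← smul_smul]
      rw [← hwqeq, smul_smul, inv_mul_cancel₀ hβ, one_smul]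
    rw [← hwqdef, this, Units.smul_mk0, smul_smul]
    rw [show (α⁻¹ * β) * (β⁻¹ * α) = 1 by field_simp]
    rw [one_smul]
  have hqZ : q ∈ Z d := by
    have hqin : q ∈ {p : ℙ ℂ V | ∃ i y, y ≠ g ∧ p.submodule ≤ ℓ i ∧ p.submodule ≤ R y} :=
      ⟨i, d, hdg, hql, hqd⟩
    rw [hset] at hqin
    obtain ⟨hqU, -⟩ := hqin
    obtain ⟨y', hy'⟩ := Set.mem_iUnion.mp hqU
    by_cases hyd : y' = d
    · rwa [hyd] at hy'
    · exfalso
      have hle : q.submodule ≤ R y' ⊓ R d := le_inf (hyp.mem_line y' q hy') hqd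
      rw [hyp.skew y' d hyd] at hle
      exact hwq0 (by simpa using hle (rep_mem_submodule' q))
  exact ⟨hAu0, hq ▸ hqZ⟩


end HGAux
end

set_option maxHeartbeats 1000000
set_option synthInstance.maxHeartbeats 200000

/-- Transversals to the four lines.
Under the half-grid hypotheses for a 16-point set on four pairwise skew lines
`R 0, …, R 3` in `ℙ³`, there are two distinct lines `S ≠ S'`, each meeting all four
lines. -/
theorem exists_two_transversals
    (R : Fin 4 → Submodule ℂ (Fin 4 → ℂ)) (Z : Fin 4 → Set (ℙ ℂ (Fin 4 → ℂ)))
    (hyp : HalfGridHyp R Z) :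
    ∃ S S' : Submodule ℂ (Fin 4 → ℂ),
      Module.finrank ℂ S = 2 ∧ Module.finrank ℂ S' = 2 ∧ S ≠ S' ∧
      (∀ x, S ⊓ R x ≠ ⊥) ∧ (∀ x, S' ⊓ R x ≠ ⊥) := by
  classical
  have sk := hyp.skew
  have fr := hyp.finrank_eq
  obtain ⟨A, hAbij, hAgraph, hArep⟩ :=
    HGAux.graph_exists (R 2) (R 3) (R 0) (fr 2) (fr 3) (fr 0)
      (sk 2 3 (by decide)) (sk 0 2 (by decide)) (sk 0 3 (by decide))
  obtain ⟨B, hBbij, hBgraph, hBrep⟩ :=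
    HGAux.graph_exists (R 2) (R 3) (R 1) (fr 2) (fr 3) (fr 1)
      (sk 2 3 (by decide)) (sk 1 2 (by decide)) (sk 1 3 (by decide))
  set Aeq := LinearEquiv.ofBijective A hAbij with hAeq
  set C : Module.End ℂ (R 2) := (Aeq.symm : (R 3) →ₗ[ℂ] (R 2)) ∘ₗ B with hC
  have hAeqA : ∀ u : R 2, Aeq u = A u := fun u => rfl
  have hAC : ∀ u : R 2, A (C u) = B u := by
    intro u
    have : C u = Aeq.symm (B u) := rfl
    rw [this, ← hAeqA, Aeq.apply_symm_apply]
  have hCinj : Function.Injective C := by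
    intro u v huv
    have h1 : A (C u) = A (C v) := by rw [huv]
    rw [hAC, hAC] at h1
    exact hBbij.injective h1
  -- basic point machinery
  have hvec : ∀ p ∈ Z 2, ∃ u : ↥(R 2), ∃ hu : (u : (Fin 4 → ℂ)) ≠ 0,
      Projectivization.mk ℂ (u : (Fin 4 → ℂ)) hu = p := by
    intro p hp
    refine ⟨⟨p.rep, hyp.mem_line 2 p hp (HGAux.rep_mem_submodule' p)⟩,
      Projectivization.rep_nonzero p, Projectivization.mk_rep p⟩
  have pushA : ∀ (u : ↥(R 2)) (hu : (u : (Fin 4 → ℂ)) ≠ 0),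
      Projectivization.mk ℂ (u : (Fin 4 → ℂ)) hu ∈ Z 2 →
      ∃ hw : ((A u : (Fin 4 → ℂ))) ≠ 0, Projectivization.mk ℂ ((A u : (Fin 4 → ℂ))) hw ∈ Z 3 :=
    fun u hu hp => HGAux.push R Z hyp 2 3 0 1 (by decide) (by decide) (by decide) (by decide)
      A hAbij.injective hArep u hu hp
  have pushB : ∀ (u : ↥(R 2)) (hu : (u : (Fin 4 → ℂ)) ≠ 0),
      Projectivization.mk ℂ (u : (Fin 4 → ℂ)) hu ∈ Z 2 →
      ∃ hw : ((B u : (Fin 4 → ℂ))) ≠ 0, Projectivization.mk ℂ ((B u : (Fin 4 → ℂ))) hw ∈ Z 3 :=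
    fun u hu hp => HGAux.push R Z hyp 2 3 1 0 (by decide) (by decide) (by decide) (by decide)
      B hBbij.injective hBrep u hu hp
  have hfin : ∀ x, (Z x).Finite := fun x =>
    Set.finite_of_ncard_ne_zero (by rw [hyp.ncard_eq]; norm_num)
  haveI hfin2 : Fintype ↥(Z 2) := (hfin 2).fintype
  haveI hfin3 : Fintype ↥(Z 3) := (hfin 3).fintype
  have hcard2 : Fintype.card ↥(Z 2) = 4 := by
    rw [← Nat.card_eq_fintype_card, Nat.card_coe_set_eq, hyp.ncard_eq]
  have hcard3 : Fintype.card ↥(Z 3) = 4 := by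
    rw [← Nat.card_eq_fintype_card, Nat.card_coe_set_eq, hyp.ncard_eq]
  choose uvec hu0 hmk using fun p : ↥(Z 2) => hvec p.1 p.2
  choose hw3 hZ3 using fun p : ↥(Z 2) =>
    pushA (uvec p) (hu0 p) (by rw [hmk p]; exact p.2)
  set F : ↥(Z 2) → ↥(Z 3) := fun p =>
    ⟨Projectivization.mk ℂ ((A (uvec p) : (Fin 4 → ℂ))) (hw3 p), hZ3 p⟩ with hF
  have hFinj : Function.Injective F := by
    intro p p' h
    have hval : Projectivization.mk ℂ ((A (uvec p) : (Fin 4 → ℂ))) (hw3 p)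
        = Projectivization.mk ℂ ((A (uvec p') : (Fin 4 → ℂ))) (hw3 p') := congrArg Subtype.val h
    rw [Projectivization.mk_eq_mk_iff] at hval
    obtain ⟨e, he⟩ := hval
    have hAe : A ((e : ℂ) • uvec p') = A (uvec p) := by
      apply Subtype.ext
      rw [map_smul]
      exact he
    have huu : (e : ℂ) • uvec p' = uvec p := hAbij.injective hAe
    have hmm : Projectivization.mk ℂ ((uvec p : (Fin 4 → ℂ))) (hu0 p)
        = Projectivization.mk ℂ ((uvec p' : (Fin 4 → ℂ))) (hu0 p') := by
      rw [Projectivization.mk_eq_mk_iff]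
      refine ⟨e, ?_⟩
      rw [← huu]; rfl
    apply Subtype.ext
    rw [← hmk p, ← hmk p', hmm]
  have hFsurj : Function.Surjective F :=
    ((Fintype.bijective_iff_injective_and_card F).2 ⟨hFinj, by rw [hcard2, hcard3]⟩).2
  -- the step set
  set T : Set ↥(R 2) :=
    {u : ↥(R 2) | ∃ hu : (u : (Fin 4 → ℂ)) ≠ 0, Projectivization.mk ℂ (u : (Fin 4 → ℂ)) hu ∈ Z 2}
    with hT
  have h0T : (0 : ↥(R 2)) ∉ T := by
    rintro ⟨hu, -⟩
    exact hu (by simp)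
  have hneZ2 : (Z 2).Nonempty := Set.nonempty_of_ncard_ne_zero (by rw [hyp.ncard_eq]; norm_num)
  have hneT : T.Nonempty := by
    obtain ⟨p, hp⟩ := hneZ2
    obtain ⟨u, hu, hmku⟩ := hvec p hp
    exact ⟨u, hu, by rw [hmku]; exact hp⟩
  have hstepT : ∀ u ∈ T, ∃ w ∈ T, ∃ s : ℂ, C u = s • w := by
    rintro u ⟨hu, hmku⟩
    obtain ⟨hwB, hBZ⟩ := pushB u hu hmku
    obtain ⟨p, hFp⟩ := hFsurj ⟨Projectivization.mk ℂ ((B u : (Fin 4 → ℂ))) hwB, hBZ⟩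
    have hval : Projectivization.mk ℂ ((A (uvec p) : (Fin 4 → ℂ))) (hw3 p)
        = Projectivization.mk ℂ ((B u : (Fin 4 → ℂ))) hwB := congrArg Subtype.val hFp
    rw [Projectivization.mk_eq_mk_iff] at hval
    obtain ⟨e, he⟩ := hval
    have heS : (e : ℂ) • (B u) = A (uvec p) := Subtype.ext he
    refine ⟨uvec p, ⟨hu0 p, by rw [hmk p]; exact p.2⟩, (e⁻¹ : ℂˣ), ?_⟩
    apply hAbij.injective
    rw [hAC, map_smul, ← heS, smul_smul, Units.inv_mul, one_smul]
  have hsmallT : ∀ f : Fin 5 → ↥(R 2), (∀ i, f i ∈ T) →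
      ∃ i j, i ≠ j ∧ ∃ s : ℂ, f j = s • f i := by
    intro f hf
    choose hfne hfZ using hf
    set g : Fin 5 → ↥(Z 2) := fun i =>
      ⟨Projectivization.mk ℂ ((f i : (Fin 4 → ℂ))) (hfne i), hfZ i⟩ with hg
    obtain ⟨i, j, hij, hgeq⟩ := Fintype.exists_ne_map_eq_of_card_lt g
      (by rw [hcard2]; simp)
    have hval : Projectivization.mk ℂ ((f i : (Fin 4 → ℂ))) (hfne i)
        = Projectivization.mk ℂ ((f j : (Fin 4 → ℂ))) (hfne j) := congrArg Subtype.val hgeq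
    rw [Projectivization.mk_eq_mk_iff] at hval
    obtain ⟨e, he⟩ := hval
    refine ⟨j, i, hij.symm, (e : ℂ), Subtype.ext ?_⟩
    exact he.symm
  -- the transversal associated to an eigenvector
  have transv : ∀ (v : ↥(R 2)), (v : (Fin 4 → ℂ)) ≠ 0 → (∃ s : ℂ, C v = s • v) →
      Module.finrank ℂ (Submodule.span ℂ {(v : (Fin 4 → ℂ)), ((A v : (Fin 4 → ℂ)))}) = 2 ∧
      ∀ x, Submodule.span ℂ {(v : (Fin 4 → ℂ)), ((A v : (Fin 4 → ℂ)))} ⊓ R x ≠ ⊥ := by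
    rintro v hv0 ⟨s, hs⟩
    have hv0' : v ≠ 0 := fun h => hv0 (by rw [h]; rfl)
    have hAv0 : ((A v : (Fin 4 → ℂ))) ≠ 0 := by
      intro h
      exact hv0' (hAbij.injective (by rw [map_zero]; exact Subtype.ext h))
    set Sv := Submodule.span ℂ {(v : (Fin 4 → ℂ)), ((A v : (Fin 4 → ℂ)))} with hSv
    have hvS : (v : (Fin 4 → ℂ)) ∈ Sv := Submodule.subset_span (by simp)
    have hAvS : ((A v : (Fin 4 → ℂ))) ∈ Sv := Submodule.subset_span (by simp)
    have hind : LinearIndependent ℂ ![(v : (Fin 4 → ℂ)), ((A v : (Fin 4 → ℂ)))] :=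
      HGAux.indep_of_disjoint (sk 2 3 (by decide)) v.2 (A v).2 hv0 hAv0
    refine ⟨HGAux.span_pair_finrank hind, ?_⟩
    have hBv : ((B v : (Fin 4 → ℂ))) = s • ((A v : (Fin 4 → ℂ))) := by
      have h1 : A (C v) = A (s • v) := by rw [hs]
      rw [hAC, map_smul] at h1
      exact congrArg Subtype.val h1
    intro x
    rw [Submodule.ne_bot_iff]
    fin_cases x
    · -- R 0
      refine ⟨(v : (Fin 4 → ℂ)) + ((A v : (Fin 4 → ℂ))), ⟨add_mem hvS hAvS, hAgraph v⟩, ?_⟩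
      intro h
      have h2 : (v : (Fin 4 → ℂ)) ∈ R 2 ⊓ R 3 := by
        refine ⟨v.2, ?_⟩
        have : (v : (Fin 4 → ℂ)) = -((A v : (Fin 4 → ℂ))) := by
          rw [eq_neg_iff_add_eq_zero]; exact h
        rw [this]
        exact neg_mem (A v).2
      rw [sk 2 3 (by decide)] at h2
      exact hv0 (by simpa using h2)
    · -- R 1
      refine ⟨(v : (Fin 4 → ℂ)) + ((B v : (Fin 4 → ℂ))),
        ⟨add_mem hvS (by rw [hBv]; exact Submodule.smul_mem _ _ hAvS), hBgraph v⟩, ?_⟩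
      intro h
      have h2 : (v : (Fin 4 → ℂ)) ∈ R 2 ⊓ R 3 := by
        refine ⟨v.2, ?_⟩
        have : (v : (Fin 4 → ℂ)) = -((B v : (Fin 4 → ℂ))) := by
          rw [eq_neg_iff_add_eq_zero]; exact h
        rw [this]
        exact neg_mem (B v).2
      rw [sk 2 3 (by decide)] at h2
      exact hv0 (by simpa using h2)
    · exact ⟨(v : (Fin 4 → ℂ)), ⟨hvS, v.2⟩, hv0⟩
    · exact ⟨((A v : (Fin 4 → ℂ))), ⟨hAvS, (A v).2⟩, hAv0⟩
  -- produce the final answer from two independent eigenvectors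
  have finish : ∀ (v₁ v₂ : ↥(R 2)), LinearIndependent ℂ ![v₁, v₂] →
      (∃ s : ℂ, C v₁ = s • v₁) → (∃ t : ℂ, C v₂ = t • v₂) →
      ∃ S S' : Submodule ℂ (Fin 4 → ℂ),
        Module.finrank ℂ S = 2 ∧ Module.finrank ℂ S' = 2 ∧ S ≠ S' ∧
        (∀ x, S ⊓ R x ≠ ⊥) ∧ (∀ x, S' ⊓ R x ≠ ⊥) := by
    intro v₁ v₂ hind h₁ h₂
    have hv₁0 : (v₁ : (Fin 4 → ℂ)) ≠ 0 := by
      intro h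
      exact (hind.ne_zero 0) (by simpa using Subtype.ext h)
    have hv₂0 : (v₂ : (Fin 4 → ℂ)) ≠ 0 := by
      intro h
      exact (hind.ne_zero 1) (by simpa using Subtype.ext h)
    obtain ⟨hfr₁, hmeet₁⟩ := transv v₁ hv₁0 h₁
    obtain ⟨hfr₂, hmeet₂⟩ := transv v₂ hv₂0 h₂
    refine ⟨_, _, hfr₁, hfr₂, ?_, hmeet₁, hmeet₂⟩
    intro hSS
    have hv₂S : (v₂ : (Fin 4 → ℂ)) ∈
        Submodule.span ℂ {(v₁ : (Fin 4 → ℂ)), ((A v₁ : (Fin 4 → ℂ)))} := by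
      rw [hSS]
      exact Submodule.subset_span (by simp)
    obtain ⟨α, β, hc⟩ := Submodule.mem_span_pair.mp hv₂S
    have hmem : β • ((A v₁ : (Fin 4 → ℂ))) ∈ R 2 ⊓ R 3 := by
      constructor
      · have : β • ((A v₁ : (Fin 4 → ℂ))) = (v₂ : (Fin 4 → ℂ)) - α • (v₁ : (Fin 4 → ℂ)) := by
          rw [← hc]; abel
        rw [this]
        exact sub_mem v₂.2 (Submodule.smul_mem _ _ v₁.2)
      · exact Submodule.smul_mem _ _ (A v₁).2
    rw [sk 2 3 (by decide)] at hmem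
    have hβ : β = 0 := by
      rcases smul_eq_zero.mp ((Submodule.mem_bot ℂ).mp hmem) with h | h
      · exact h
      · exfalso
        have hA0 : A v₁ = 0 := Subtype.ext h
        have hv1z : v₁ = 0 := hAbij.injective (by rw [hA0, map_zero])
        exact hv₁0 (by rw [hv1z]; rfl)
    rw [hβ, zero_smul, add_zero] at hc
    have hzero : α • v₁ + (-1 : ℂ) • v₂ = 0 := by
      have hcS : α • v₁ = v₂ := Subtype.ext (by exact_mod_cast hc)
      rw [hcS, show ((-1 : ℂ) • v₂) = -v₂ from neg_one_smul ℂ v₂]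
      simp
    have := (LinearIndependent.pair_iff.mp hind α (-1) hzero).2
    norm_num at this
  -- eigenvalue analysis
  haveI : FiniteDimensional ℂ ↥(R 2) := inferInstance
  obtain ⟨a, b, hab⟩ := HGAux.charpoly_factor (fr 2) C
  set Ea : Module.End ℂ ↥(R 2) := C - algebraMap ℂ (Module.End ℂ ↥(R 2)) a with hEa
  set Eb : Module.End ℂ ↥(R 2) := C - algebraMap ℂ (Module.End ℂ ↥(R 2)) b with hEb
  have hEaApp : ∀ w : ↥(R 2), Ea w = C w - a • w := by
    intro w; rw [hEa]; simp [Module.algebraMap_end_apply]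
  have hEbApp : ∀ w : ↥(R 2), Eb w = C w - b • w := by
    intro w; rw [hEb]; simp [Module.algebraMap_end_apply]
  -- the scalar case
  have scalarCase : ∀ r : ℂ, (∀ w : ↥(R 2), C w = r • w) →
      ∃ S S' : Submodule ℂ (Fin 4 → ℂ),
        Module.finrank ℂ S = 2 ∧ Module.finrank ℂ S' = 2 ∧ S ≠ S' ∧
        (∀ x, S ⊓ R x ≠ ⊥) ∧ (∀ x, S' ⊓ R x ≠ ⊥) := by
    intro r hr
    obtain ⟨p₁, hp₁⟩ := hneZ2
    obtain ⟨p₂, hp₂, hp₂ne⟩ := Set.exists_ne_of_one_lt_ncard (by rw [hyp.ncard_eq 2]; norm_num) p₁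
    obtain ⟨u₁, hu₁, hmk₁⟩ := hvec p₁ hp₁
    obtain ⟨u₂, hu₂, hmk₂⟩ := hvec p₂ hp₂
    have hind : LinearIndependent ℂ ![u₁, u₂] := by
      rw [LinearIndependent.pair_iff]
      intro σ τ hστ
      by_cases hτ : τ = 0
      · subst hτ
        rw [zero_smul, add_zero] at hστ
        rcases smul_eq_zero.mp hστ with h | h
        · exact ⟨h, rfl⟩
        · exact absurd h (fun h0 => hu₁ (by rw [h0]; rfl))
      · exfalso
        have h5 : τ • u₂ = (-σ) • u₁ := by
          rw [show ((-σ) • u₁ : _) = -(σ • u₁) from neg_smul σ u₁,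
            eq_neg_iff_add_eq_zero, add_comm]
          exact hστ
        have h6 := congrArg (fun z => τ⁻¹ • z) h5
        simp only [smul_smul, inv_mul_cancel₀ hτ, one_smul] at h6
        have hu₂eq : u₂ = (-σ/τ) • u₁ := by rw [div_eq_inv_mul]; exact h6
        have hcne : (-σ/τ) ≠ 0 := by
          intro h
          rw [h, zero_smul] at hu₂eq
          exact hu₂ (by rw [hu₂eq]; rfl)
        apply hp₂ne
        rw [← hmk₁, ← hmk₂]
        rw [Projectivization.mk_eq_mk_iff]
        refine ⟨Units.mk0 (-σ/τ) hcne, ?_⟩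
        rw [hu₂eq]
        rfl
    exact finish u₁ u₂ hind ⟨r, hr u₁⟩ ⟨r, hr u₂⟩
  by_cases hkb : LinearMap.ker Eb = ⊥
  · -- Eb injective hence surjective, so Ea = 0 and C is scalar a
    have hEbinj : Function.Injective Eb := LinearMap.ker_eq_bot.mp hkb
    have hEbsurj : Function.Surjective Eb :=
      (LinearMap.injective_iff_surjective_of_finrank_eq_finrank rfl).mp hEbinj
    refine scalarCase a (fun w => ?_)
    obtain ⟨v, rfl⟩ := hEbsurj w
    have h0 : Ea (Eb v) = 0 := by
      have : (Ea * Eb) v = (0 : Module.End ℂ ↥(R 2)) v := by rw [hab]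
      simpa [Module.End.mul_apply] using this
    rw [hEaApp, sub_eq_zero] at h0
    exact h0
  · obtain ⟨v₂, hv₂k, hv₂0⟩ := Submodule.ne_bot_iff _ |>.mp hkb
    have hCv₂ : C v₂ = b • v₂ := by
      have := LinearMap.mem_ker.mp hv₂k
      rw [hEbApp, sub_eq_zero] at this
      exact this
    by_cases hka : LinearMap.ker Ea = ⊥
    · -- Ea injective, so Eb = 0 and C is scalar b
      have hEainj : Function.Injective Ea := LinearMap.ker_eq_bot.mp hka
      refine scalarCase b (fun w => ?_)
      have h0 : Ea (Eb w) = 0 := by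
        rw [← Module.End.mul_apply, hab]; rfl
      have hEbw : Eb w = 0 := hEainj (by rw [h0, map_zero])
      rw [hEbApp, sub_eq_zero] at hEbw
      exact hEbw
    · obtain ⟨v₁, hv₁k, hv₁0⟩ := Submodule.ne_bot_iff _ |>.mp hka
      have hCv₁ : C v₁ = a • v₁ := by
        have := LinearMap.mem_ker.mp hv₁k
        rw [hEaApp, sub_eq_zero] at this
        exact this
      by_cases hba : a = b
      · -- nilpotent case: use the permutation of Z 2
        subst hba
        have hCdec : ∀ w : ↥(R 2), C w = a • w + Ea w := by
          intro w; rw [hEaApp]; abel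
        have hN2 : ∀ w : ↥(R 2), Ea (Ea w) = 0 := by
          intro w
          rw [← Module.End.mul_apply, hab]; rfl
        have ha0 : a ≠ 0 := by
          intro h
          apply hv₁0
          apply hCinj
          rw [hCv₁, h, zero_smul, map_zero]
        obtain ⟨w₁, hw₁T, k₁, hk₁, s₁, hCk₁⟩ := HGAux.collision C T hneT h0T hstepT hsmallT
        have hw₁0 : w₁ ≠ 0 := fun h => h0T (h ▸ hw₁T)
        have hCw₁ : C w₁ = a • w₁ :=
          HGAux.eig_of_pow C Ea a hCdec hN2 ha0 w₁ hw₁0 k₁ hk₁ s₁ hCk₁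
        obtain ⟨hw₁v, hw₁Z⟩ := hw₁T
        set T' : Set ↥(R 2) := {u : ↥(R 2) | u ∈ T ∧ ∀ s : ℂ, u ≠ s • w₁} with hT'
        have h0T' : (0 : ↥(R 2)) ∉ T' := fun h => h0T h.1
        have hneT' : T'.Nonempty := by
          obtain ⟨p₂, hp₂, hp₂ne⟩ := Set.exists_ne_of_one_lt_ncard
            (by rw [hyp.ncard_eq 2]; norm_num)
            (Projectivization.mk ℂ ((w₁ : (Fin 4 → ℂ))) hw₁v)
          obtain ⟨u₂, hu₂, hmk₂⟩ := hvec p₂ hp₂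
          refine ⟨u₂, ⟨hu₂, by rw [hmk₂]; exact hp₂⟩, ?_⟩
          intro s hs
          apply hp₂ne
          have hsne : s ≠ 0 := by
            intro h0
            rw [h0, zero_smul] at hs
            exact hu₂ (by rw [hs]; rfl)
          rw [← hmk₂]
          rw [Projectivization.mk_eq_mk_iff]
          exact ⟨Units.mk0 s hsne, by rw [hs]; rfl⟩
        have hstepT' : ∀ u ∈ T', ∃ w ∈ T', ∃ s : ℂ, C u = s • w := by
          rintro u ⟨huT, hunp⟩
          obtain ⟨w, hwT, s, hsw⟩ := hstepT u huT
          refine ⟨w, ⟨hwT, ?_⟩, s, hsw⟩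
          intro t hwt
          apply hunp (s * t / a)
          apply hCinj
          rw [hsw, hwt, smul_smul]
          rw [map_smul, hCw₁, smul_smul]
          congr 1
          field_simp
        have hsmallT' : ∀ f : Fin 5 → ↥(R 2), (∀ i, f i ∈ T') →
            ∃ i j, i ≠ j ∧ ∃ s : ℂ, f j = s • f i :=
          fun f hf => hsmallT f (fun i => (hf i).1)
        obtain ⟨w₂, hw₂T', k₂, hk₂, s₂, hCk₂⟩ :=
          HGAux.collision C T' hneT' h0T' hstepT' hsmallT'
        have hw₂0 : w₂ ≠ 0 := fun h => h0T' (h ▸ hw₂T')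
        have hCw₂ : C w₂ = a • w₂ :=
          HGAux.eig_of_pow C Ea a hCdec hN2 ha0 w₂ hw₂0 k₂ hk₂ s₂ hCk₂
        have hind : LinearIndependent ℂ ![w₁, w₂] := by
          rw [LinearIndependent.pair_iff]
          intro σ τ hστ
          by_cases hτ : τ = 0
          · subst hτ
            rw [zero_smul, add_zero] at hστ
            rcases smul_eq_zero.mp hστ with h | h
            · exact ⟨h, rfl⟩
            · exact absurd h hw₁0
          · exfalso
            apply hw₂T'.2 (-σ/τ)
            have h5 : τ • w₂ = (-σ) • w₁ := by
              rw [show ((-σ) • w₁ : _) = -(σ • w₁) from neg_smul σ w₁,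
                eq_neg_iff_add_eq_zero, add_comm]
              exact hστ
            have h6 := congrArg (fun z => τ⁻¹ • z) h5
            simp only [smul_smul, inv_mul_cancel₀ hτ, one_smul] at h6
            rw [div_eq_inv_mul]
            exact h6
        exact finish w₁ w₂ hind ⟨a, hCw₁⟩ ⟨a, hCw₂⟩
      · -- two distinct eigenvalues
        have hind : LinearIndependent ℂ ![v₁, v₂] := by
          rw [LinearIndependent.pair_iff]
          intro σ τ hστ
          have h1 : σ • C v₁ + τ • C v₂ = 0 := by
            rw [← map_smul, ← map_smul, ← map_add, hστ, map_zero]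
          rw [hCv₁, hCv₂, smul_smul, smul_smul] at h1
          have h2 : a • (σ • v₁ + τ • v₂) = 0 := by rw [hστ, smul_zero]
          rw [smul_add, smul_smul, smul_smul] at h2
          have h3 : (τ * b - a * τ) • v₂ = 0 := by
            have e1 : (τ * b - a * τ) • v₂ =
                ((σ * a) • v₁ + (τ * b) • v₂) - ((a * σ) • v₁ + (a * τ) • v₂) := by
              module
            rw [e1, h1, h2, sub_zero]
          have hτ : τ = 0 := by
            rcases smul_eq_zero.mp h3 with h | h
            · have : τ * (b - a) = 0 := by rw [← h]; ring
              rcases mul_eq_zero.mp this with h' | h'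
              · exact h'
              · exact absurd (sub_eq_zero.mp h').symm hba
            · exact absurd h hv₂0
          subst hτ
          rw [zero_smul, add_zero] at hστ
          rcases smul_eq_zero.mp hστ with h | h
          · exact ⟨h, rfl⟩
          · exact absurd h hv₁0
        exact finish v₁ v₂ hind ⟨a, hCv₁⟩ ⟨b, hCv₂⟩
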